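/- Let p, q ∈ (1,∞) and n a nonnegative integer. Then ∫₀^{π_{p,q}/2} sin_{p,q}^{qn+q−2}(t) dt = [(1/q*)_n / ((q−1)·(1/p* + 1/q*)_n)] · π_{p,q*}/2, where q* = q/(q−1). -/

import Mathlib

open Set MeasureTheory Filter

/-- Generalized arcsine: `arcsin_{p,q}(x) = ∫₀ˣ (1 - tᵠ)^(-1/p) dt`. -/
noncomputable def gArcsin (p q x : ℝ) : ℝ := ∫ t in (0:ℝ)..x, (1 - t ^ q) ^ (-(1 / p))

/-- Generalized pi: `π_{p,q} = 2 ∫₀¹ (1 - tᵠ)^(-1/p) dt`. -/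
noncomputable def gPi (p q : ℝ) : ℝ := 2 * gArcsin p q 1

/-- `S` is the generalized sine `sin_{p,q}` (the inverse of `gArcsin p q` on `[0,1]`). -/
def IsGSin (p q : ℝ) (S : ℝ → ℝ) : Prop :=
  ∀ y ∈ Icc (0:ℝ) 1, S (gArcsin p q y) = y

/-- `C` is the generalized cosine `cos_{p,q}`, the derivative of `S = sin_{p,q}`
on `[0, π_{p,q}/2]`. -/
def IsGCos (p q : ℝ) (S C : ℝ → ℝ) : Prop :=
  ∀ x ∈ Icc (0:ℝ) (gPi p q / 2), HasDerivWithinAt S (C x) (Icc (0:ℝ) (gPi p q / 2)) x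

namespace Stmt11

/-- The basic integral `I p q s = ∫₀¹ uˢ (1-uᵠ)^(-1/p) du`. -/
noncomputable def I (p q s : ℝ) : ℝ := ∫ u in (0:ℝ)..1, u ^ s * (1 - u ^ q) ^ (-(1 / p))

lemma aux_meas (p q s : ℝ) :
    Measurable fun u : ℝ => u ^ s * (1 - u ^ q) ^ (-(1 / p)) := by
  measurability

lemma aux_integrable {p q : ℝ} (hp : 1 < p) (hq : 1 < q) {s : ℝ} (hs : -1 < s) :
    IntervalIntegrable (fun u : ℝ => u ^ s * (1 - u ^ q) ^ (-(1 / p))) volume 0 1 := by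
  have hp0 : (0:ℝ) < 1 / p := by positivity
  have hp1 : 1 / p < 1 := by rw [div_lt_one (by linarith)]; linarith
  have hbeta := Complex.betaIntegral_convergent (u := ((s + 1 : ℝ) : ℂ))
    (v := ((1 - 1 / p : ℝ) : ℂ)) (by rw [Complex.ofReal_re]; linarith)
    (by rw [Complex.ofReal_re]; linarith)
  refine hbeta.mono_fun (aux_meas p q s).aestronglyMeasurable ?_
  refine (ae_restrict_iff' measurableSet_uIoc).mpr (Eventually.of_forall fun x hx => ?_)
  rw [uIoc_of_le zero_le_one] at hx
  obtain ⟨hx0, hx1⟩ := hx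
  have hxq : x ^ q ≤ 1 := Real.rpow_le_one hx0.le hx1 (by linarith)
  have hnn : (0:ℝ) ≤ x ^ s * (1 - x ^ q) ^ (-(1 / p)) :=
    mul_nonneg (Real.rpow_nonneg hx0.le _) (Real.rpow_nonneg (by linarith) _)
  simp only [Real.norm_eq_abs]
  rw [abs_of_nonneg hnn, norm_mul]
  have e1 : ‖(x:ℂ) ^ (((s + 1 : ℝ) : ℂ) - 1)‖ = x ^ s := by
    rw [Complex.norm_cpow_eq_rpow_re_of_pos hx0]
    norm_num
  rw [e1]
  rcases eq_or_lt_of_le hx1 with h1 | h1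
  · have hz : (1:ℝ) - x ^ q = 0 := by rw [h1]; simp
    rw [hz, Real.zero_rpow (neg_ne_zero.mpr hp0.ne'), mul_zero]
    positivity
  · have h1x : (0:ℝ) < 1 - x := by linarith
    have e2 : (1 : ℂ) - (x:ℂ) = ((1 - x : ℝ) : ℂ) := by push_cast; ring
    rw [e2, Complex.norm_cpow_eq_rpow_re_of_pos h1x]
    have e3 : (((1 - 1 / p : ℝ) : ℂ) - 1).re = -(1 / p) := by simp
    rw [e3]
    have hle : (1:ℝ) - x ≤ 1 - x ^ q := by
      have : x ^ q ≤ x := by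
        have := Real.rpow_le_rpow_of_exponent_ge hx0 hx1 hq.le
        rwa [Real.rpow_one] at this
      linarith
    exact mul_le_mul_of_nonneg_left
      (Real.rpow_le_rpow_of_nonpos h1x hle (by linarith)) (Real.rpow_nonneg hx0.le _)

lemma w_meas (p q : ℝ) : Measurable fun t : ℝ => (1 - t ^ q) ^ (-(1 / p)) := by
  measurability

lemma w_integrable {p q : ℝ} (hp : 1 < p) (hq : 1 < q) :
    IntervalIntegrable (fun t : ℝ => (1 - t ^ q) ^ (-(1 / p))) volume 0 1 := by
  have h := aux_integrable hp hq (show (-1:ℝ) < 0 by norm_num)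
  simpa [Real.rpow_zero] using h

lemma base_pos {q : ℝ} (hq : 1 < q) {x : ℝ} (hx0 : 0 ≤ x) (hx1 : x < 1) : 0 < 1 - x ^ q := by
  have := Real.rpow_lt_one hx0 hx1 (by linarith : (0:ℝ) < q)
  linarith

lemma gArcsin_hasDerivAt {p q : ℝ} (hp : 1 < p) (hq : 1 < q) {x : ℝ}
    (hx0 : 0 ≤ x) (hx1 : x < 1) :
    HasDerivAt (gArcsin p q) ((1 - x ^ q) ^ (-(1 / p))) x := by
  apply intervalIntegral.integral_hasDerivAt_right
  · exact (w_integrable hp hq).mono_set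
      (by rw [uIcc_of_le hx0, uIcc_of_le zero_le_one]; exact Icc_subset_Icc_right hx1.le)
  · exact ⟨univ, univ_mem, ((w_meas p q).aestronglyMeasurable).restrict⟩
  · have hb : 0 < 1 - x ^ q := base_pos hq hx0 hx1
    have hinner : ContinuousAt (fun t : ℝ => 1 - t ^ q) x :=
      continuousAt_const.sub (Real.continuousAt_rpow_const x q (Or.inr (by linarith)))
    exact hinner.rpow_const (Or.inl hb.ne')

lemma gArcsin_zero {p q : ℝ} : gArcsin p q 0 = 0 := intervalIntegral.integral_same

lemma gArcsin_strictMonoOn {p q : ℝ} (hp : 1 < p) (hq : 1 < q) :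
    StrictMonoOn (gArcsin p q) (Icc (0:ℝ) 1) := by
  intro x hx y hy hxy
  have hw := w_integrable hp hq
  have hx' := hw.mono_set
    (by rw [uIcc_of_le hx.1, uIcc_of_le zero_le_one]; exact Icc_subset_Icc_right hx.2)
  have hy' := hw.mono_set
    (by rw [uIcc_of_le hy.1, uIcc_of_le zero_le_one]; exact Icc_subset_Icc_right hy.2)
  have hxy' := hw.mono_set
    (by rw [uIcc_of_le hxy.le, uIcc_of_le zero_le_one]; exact Icc_subset_Icc hx.1 hy.2)
  have key : gArcsin p q y - gArcsin p q x = ∫ t in x..y, (1 - t ^ q) ^ (-(1 / p)) :=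
    intervalIntegral.integral_interval_sub_left hy' hx'
  have hpos : 0 < ∫ t in x..y, (1 - t ^ q) ^ (-(1 / p)) := by
    apply intervalIntegral.intervalIntegral_pos_of_pos_on hxy'
    · intro t ht
      exact Real.rpow_pos_of_pos
        (base_pos hq (le_trans hx.1 ht.1.le) (lt_of_lt_of_le ht.2 hy.2)) _
    · exact hxy
  have : 0 < gArcsin p q y - gArcsin p q x := by rw [key]; exact hpos
  linarith

lemma gArcsin_continuousOn {p q : ℝ} (hp : 1 < p) (hq : 1 < q) :
    ContinuousOn (gArcsin p q) (Icc (0:ℝ) 1) := by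
  have h_int : IntegrableOn (fun t : ℝ => (1 - t ^ q) ^ (-(1 / p))) (uIcc (0:ℝ) 1) volume := by
    rw [uIcc_of_le zero_le_one]
    exact (intervalIntegrable_iff_integrableOn_Icc_of_le zero_le_one).mp (w_integrable hp hq)
  have := intervalIntegral.continuousOn_primitive_interval h_int
  rw [uIcc_of_le zero_le_one] at this
  exact this

lemma gArcsin_one_pos {p q : ℝ} (hp : 1 < p) (hq : 1 < q) : 0 < gArcsin p q 1 := by
  have := gArcsin_strictMonoOn hp hq (left_mem_Icc.mpr zero_le_one)
    (right_mem_Icc.mpr zero_le_one) one_pos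
  rwa [gArcsin_zero] at this

lemma gArcsin_image {p q : ℝ} (hp : 1 < p) (hq : 1 < q) :
    gArcsin p q '' (Ioo 0 1) = Ioo 0 (gArcsin p q 1) := by
  apply Subset.antisymm
  · rintro _ ⟨x, hx, rfl⟩
    have hxm : x ∈ Icc (0:ℝ) 1 := ⟨hx.1.le, hx.2.le⟩
    constructor
    · have := gArcsin_strictMonoOn hp hq (left_mem_Icc.mpr zero_le_one) hxm hx.1
      rwa [gArcsin_zero] at this
    · exact gArcsin_strictMonoOn hp hq hxm (right_mem_Icc.mpr zero_le_one) hx.2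
  · have h := intermediate_value_Ioo zero_le_one (gArcsin_continuousOn hp hq)
    rwa [gArcsin_zero] at h

lemma integral_comp {p q : ℝ} (hp : 1 < p) (hq : 1 < q) (g : ℝ → ℝ) :
    ∫ t in Ioo (0:ℝ) (gArcsin p q 1), g t
      = ∫ x in Ioo (0:ℝ) 1, (1 - x ^ q) ^ (-(1 / p)) * g (gArcsin p q x) := by
  rw [← gArcsin_image hp hq,
    integral_image_eq_integral_abs_deriv_smul measurableSet_Ioo
      (fun x hx => (gArcsin_hasDerivAt hp hq hx.1.le hx.2).hasDerivWithinAt)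
      (((gArcsin_strictMonoOn hp hq).injOn).mono Ioo_subset_Icc_self) g]
  refine setIntegral_congr_fun measurableSet_Ioo fun x hx => ?_
  rw [smul_eq_mul, abs_of_pos (Real.rpow_pos_of_pos (base_pos hq hx.1.le hx.2) _)]

lemma lhs_eq {p q : ℝ} (hp : 1 < p) (hq : 1 < q) (S : ℝ → ℝ) (hS : IsGSin p q S) (s : ℝ) :
    ∫ t in (0:ℝ)..(gArcsin p q 1), S t ^ s = I p q s := by
  rw [intervalIntegral.integral_of_le (gArcsin_one_pos hp hq).le,
    MeasureTheory.integral_Ioc_eq_integral_Ioo, integral_comp hp hq (fun t => S t ^ s),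
    I, intervalIntegral.integral_of_le zero_le_one, MeasureTheory.integral_Ioc_eq_integral_Ioo]
  refine setIntegral_congr_fun measurableSet_Ioo fun x hx => ?_
  rw [hS x ⟨hx.1.le, hx.2.le⟩, mul_comm]

lemma rec_step {p q : ℝ} (hp : 1 < p) (hq : 1 < q) {a : ℝ} (ha : -1 < a) :
    (a + 1 + q * (1 - 1 / p)) * I p q (a + q) = (a + 1) * I p q a := by
  have hq0 : (0:ℝ) < q := by linarith
  have ha1 : (0:ℝ) < a + 1 := by linarith
  have hβ : (0:ℝ) < 1 - 1 / p := by
    have : 1 / p < 1 := by rw [div_lt_one (by linarith)]; linarith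
    linarith
  set F : ℝ → ℝ := fun u => u ^ (a + 1) * (1 - u ^ q) ^ (1 - 1 / p) with hF
  set G : ℝ → ℝ := fun x => (a + 1) * (x ^ a * (1 - x ^ q) ^ (-(1 / p)))
      - (a + 1 + q * (1 - 1 / p)) * (x ^ (a + q) * (1 - x ^ q) ^ (-(1 / p))) with hG
  have hcont : ContinuousOn F (Icc (0:ℝ) 1) := by
    apply ContinuousOn.mul
    · exact continuousOn_id.rpow_const fun t _ => Or.inr ha1.le
    · exact (continuousOn_const.sub
        (continuousOn_id.rpow_const fun t _ => Or.inr hq0.le)).rpow_const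
        fun t _ => Or.inr hβ.le
  have hderiv : ∀ x ∈ Ioo (0:ℝ) 1, HasDerivWithinAt F (G x) (Ioi x) x := by
    intro x hx
    have hx0 : 0 < x := hx.1
    have hb : 0 < 1 - x ^ q := base_pos hq hx0.le hx.2
    have h1 : HasDerivAt (fun u : ℝ => u ^ (a + 1)) ((a + 1) * x ^ (a + 1 - 1)) x :=
      Real.hasDerivAt_rpow_const (Or.inl hx0.ne')
    have h2 : HasDerivAt (fun u : ℝ => 1 - u ^ q) (-(q * x ^ (q - 1))) x := by
      exact (Real.hasDerivAt_rpow_const (x := x) (p := q) (Or.inl hx0.ne')).const_sub (1:ℝ)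
    have h3 : HasDerivAt (fun u : ℝ => (1 - u ^ q) ^ (1 - 1 / p))
        ((1 - 1 / p) * (1 - x ^ q) ^ (1 - 1 / p - 1) * -(q * x ^ (q - 1))) x :=
      by
        have h := (Real.hasDerivAt_rpow_const (x := 1 - x ^ q) (p := 1 - 1 / p)
          (Or.inl hb.ne')).comp x h2
        exact h
    have h4 := h1.mul h3
    have h5 : HasDerivAt F (G x) x := by
      refine HasDerivAt.congr_deriv h4 ?_
      rw [hG]
      have e0 : a + 1 - 1 = a := by ring
      have e1 : (1 - x ^ q) ^ (1 - 1 / p) = (1 - x ^ q) ^ (-(1 / p)) * (1 - x ^ q) := by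
        rw [show (1:ℝ) - 1 / p = -(1 / p) + 1 by ring, Real.rpow_add_one hb.ne']
      have e2 : (1 - x ^ q) ^ (1 - 1 / p - 1) = (1 - x ^ q) ^ (-(1 / p)) := by
        rw [show (1:ℝ) - 1 / p - 1 = -(1 / p) by ring]
      have e3 : x ^ (a + 1) = x ^ a * x := Real.rpow_add_one hx0.ne' a
      have e4 : x ^ (q - 1) = x ^ q / x := Real.rpow_sub_one hx0.ne' q
      have e5 : x ^ (a + q) = x ^ a * x ^ q := Real.rpow_add hx0 a q
      simp only [e0, e1, e2, e3, e4, e5]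
      field_simp
      ring
    exact h5.hasDerivWithinAt
  have hint1 := aux_integrable hp hq ha
  have hint2 := aux_integrable hp hq (show (-1:ℝ) < a + q by linarith)
  have hintG : IntervalIntegrable G volume 0 1 := by
    rw [hG]
    exact (hint1.const_mul _).sub (hint2.const_mul _)
  have hFTC := intervalIntegral.integral_eq_sub_of_hasDeriv_right_of_le zero_le_one
    hcont hderiv hintG
  have hF0 : F 0 = 0 := by
    rw [hF]; simp [Real.zero_rpow ha1.ne']
  have hF1 : F 1 = 0 := by
    rw [hF]; simp only [Real.one_rpow, sub_self, one_mul]; exact Real.zero_rpow hβ.ne'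
  rw [hF0, hF1, sub_zero] at hFTC
  have hsplit : ∫ y in (0:ℝ)..1, G y
      = (a + 1) * I p q a - (a + 1 + q * (1 - 1 / p)) * I p q (a + q) := by
    rw [hG, intervalIntegral.integral_sub (hint1.const_mul _) (hint2.const_mul _),
      intervalIntegral.integral_const_mul, intervalIntegral.integral_const_mul]
    rfl
  rw [hsplit] at hFTC
  linarith

lemma I_pos {p q : ℝ} (hp : 1 < p) (hq : 1 < q) {s : ℝ} (hs : -1 < s) : 0 < I p q s := by
  apply intervalIntegral.intervalIntegral_pos_of_pos_on (aux_integrable hp hq hs)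
  · intro x hx
    exact mul_pos (Real.rpow_pos_of_pos hx.1 _)
      (Real.rpow_pos_of_pos (base_pos hq hx.1.le hx.2) _)
  · exact one_pos

lemma base {p q : ℝ} (hp : 1 < p) (hq : 1 < q) :
    gArcsin p (q / (q - 1)) 1 = (q - 1) * I p q (q - 2) := by
  have hq1 : (0:ℝ) < q - 1 := by linarith
  have himg : (fun x : ℝ => x ^ (q - 1)) '' (Ioo 0 1) = Ioo (0:ℝ) 1 := by
    apply Subset.antisymm
    · rintro _ ⟨x, hx, rfl⟩
      exact ⟨Real.rpow_pos_of_pos hx.1 _, Real.rpow_lt_one hx.1.le hx.2 hq1⟩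
    · rintro y hy
      refine ⟨y ^ (1 / (q - 1)), ⟨Real.rpow_pos_of_pos hy.1 _,
        Real.rpow_lt_one hy.1.le hy.2 (by positivity)⟩, ?_⟩
      show (y ^ (1 / (q - 1))) ^ (q - 1) = y
      rw [← Real.rpow_mul hy.1.le, one_div, inv_mul_cancel₀ hq1.ne', Real.rpow_one]
  have hsub := integral_image_eq_integral_abs_deriv_smul (s := Ioo (0:ℝ) 1) measurableSet_Ioo
    (f := fun x : ℝ => x ^ (q - 1)) (f' := fun x : ℝ => (q - 1) * x ^ (q - 2))
    (fun x hx => by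
      have h := Real.hasDerivAt_rpow_const (x := x) (p := q - 1) (Or.inl hx.1.ne')
      rw [show q - 1 - 1 = q - 2 by ring] at h
      exact h.hasDerivWithinAt)
    (StrictMonoOn.injOn (fun x hx y hy h => Real.rpow_lt_rpow hx.1.le h hq1))
    (fun t => (1 - t ^ (q / (q - 1))) ^ (-(1 / p)))
  rw [himg] at hsub
  rw [gArcsin, intervalIntegral.integral_of_le zero_le_one,
    MeasureTheory.integral_Ioc_eq_integral_Ioo, hsub, I,
    intervalIntegral.integral_of_le zero_le_one,
    MeasureTheory.integral_Ioc_eq_integral_Ioo, ← integral_const_mul]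
  refine setIntegral_congr_fun measurableSet_Ioo fun x hx => ?_
  have hx0 : 0 < x := hx.1
  have e1 : (x ^ (q - 1)) ^ (q / (q - 1)) = x ^ q := by
    rw [← Real.rpow_mul hx0.le, show (q - 1) * (q / (q - 1)) = q by field_simp]
  rw [smul_eq_mul, e1, abs_of_pos (by positivity : 0 < (q - 1) * x ^ (q - 2))]
  ring

lemma poch_pos {x : ℝ} (hx : 0 < x) (n : ℕ) : 0 < (ascPochhammer ℝ n).eval x := by
  induction n with
  | zero => simp
  | succ n ih =>
    rw [ascPochhammer_succ_eval]
    have : (0:ℝ) < x + n := by positivity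
    exact mul_pos ih this

lemma key {p q : ℝ} (hp : 1 < p) (hq : 1 < q) (n : ℕ) :
    (ascPochhammer ℝ n).eval ((q - 1) / q + (p - 1) / p) * I p q (q * n + q - 2)
      = (ascPochhammer ℝ n).eval ((q - 1) / q) * I p q (q - 2) := by
  have hq0 : (0:ℝ) < q := by linarith
  have hp0 : (0:ℝ) < p := by linarith
  induction n with
  | zero => simp [show q * (0:ℕ) + q - 2 = q - 2 by push_cast; ring]
  | succ n ih =>
    have hn : (0:ℝ) ≤ q * n := by positivity
    have ha : (-1:ℝ) < q * n + q - 2 := by linarith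
    have hrec := rec_step hp hq ha
    rw [show q * (n:ℝ) + q - 2 + q = q * ((n:ℝ) + 1) + q - 2 by ring] at hrec
    have hcast : ((n + 1 : ℕ) : ℝ) = (n:ℝ) + 1 := by push_cast; ring
    rw [hcast, ascPochhammer_succ_eval, ascPochhammer_succ_eval]
    have hc : q * ((n:ℝ) + (q - 1) / q + (p - 1) / p)
        = q * (n:ℝ) + q - 2 + 1 + q * (1 - 1 / p) := by field_simp; ring
    have hd : q * ((n:ℝ) + (q - 1) / q) = q * (n:ℝ) + q - 2 + 1 := by field_simp; ring
    have h2 : ((n:ℝ) + (q - 1) / q + (p - 1) / p) * I p q (q * ((n:ℝ) + 1) + q - 2)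
        = ((n:ℝ) + (q - 1) / q) * I p q (q * (n:ℝ) + q - 2) := by
      apply mul_left_cancel₀ hq0.ne'
      rw [← mul_assoc, ← mul_assoc, hc, hd]
      exact hrec
    linear_combination (ascPochhammer ℝ n).eval ((q - 1) / q + (p - 1) / p) * h2
      + ((q - 1) / q + (n:ℝ)) * ih

end Stmt11

/-- Corollary 3.5, second formula:
`∫₀^{π_{p,q}/2} sin_{p,q}^{qn+q-2} t dt = (1/q*)ₙ/((q-1)(1/p* + 1/q*)ₙ) · π_{p,q*}/2`. -/
theorem stmt_11 (p q : ℝ) (n : ℕ) (hp : 1 < p) (hq : 1 < q)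
    (S : ℝ → ℝ) (hS : IsGSin p q S) :
    ∫ t in (0:ℝ)..(gPi p q / 2), S t ^ (q * (n : ℝ) + q - 2) =
      (ascPochhammer ℝ n).eval (1 / (q / (q - 1))) /
          ((q - 1) *
            (ascPochhammer ℝ n).eval (1 / (p / (p - 1)) + 1 / (q / (q - 1)))) *
        (gPi p (q / (q - 1)) / 2) := by
  have hq1 : (0:ℝ) < q - 1 := by linarith
  have hp1 : (0:ℝ) < p - 1 := by linarith
  have hq0 : (0:ℝ) < q := by linarith
  have hp0 : (0:ℝ) < p := by linarith
  have hL : gPi p q / 2 = gArcsin p q 1 := by rw [gPi]; ring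
  have hL' : gPi p (q / (q - 1)) / 2 = gArcsin p (q / (q - 1)) 1 := by rw [gPi]; ring
  rw [hL, hL', Stmt11.lhs_eq hp hq S hS _, Stmt11.base hp hq]
  have hc : 1 / (q / (q - 1)) = (q - 1) / q := one_div_div _ _
  have hd : 1 / (p / (p - 1)) = (p - 1) / p := one_div_div _ _
  rw [hc, hd]
  have hkey := Stmt11.key hp hq n
  have hPpos : 0 < (ascPochhammer ℝ n).eval ((q - 1) / q + (p - 1) / p) :=
    Stmt11.poch_pos (by positivity) n
  rw [show (p - 1) / p + (q - 1) / q = (q - 1) / q + (p - 1) / p by ring]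
  set Pc := (ascPochhammer ℝ n).eval ((q - 1) / q) with hPc
  set Pcd := (ascPochhammer ℝ n).eval ((q - 1) / q + (p - 1) / p) with hPcd
  set A := Stmt11.I p q (q * (n:ℝ) + q - 2) with hA
  set B := Stmt11.I p q (q - 2) with hB
  rw [div_mul_eq_mul_div, eq_div_iff (by positivity : (q - 1) * Pcd ≠ 0)]
  linear_combination (q - 1) * hkey
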